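/- Let V be a finite-dimensional real vector space, let X ∈ End(V) be diagonalizable with eigenvalue decomposition V = V_1 ⊕ ... ⊕ V_k (V_j the eigenspace for eigenvalue λ_j), with projections π_j: V → V_j. Call vectors w_1,...,w_s ∈ V_j thick if s > dim V_j and every dim V_j of them are linearly independent; call v_1,...,v_s ∈ V thick if each collection π_j(v_1),...,π_j(v_s) is thick in V_j. Let G ≤ GL(V) be a subgroup commuting with X. If v_1,...,v_s is thick and g ∈ G satisfies g v_i = e^{t_i X} v_i for some real numbers t_1,...,t_s, then g = e^{tX} for some t ∈ ℝ. -/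

import Mathlib

open Matrix

open NormedSpace in
private lemma exp_mulVec_eigen {n : ℕ} (A : Matrix (Fin n) (Fin n) ℝ) (w : Fin n → ℝ) (μ : ℝ)
    (h : A.mulVec w = μ • w) : (exp A).mulVec w = Real.exp μ • w := by
  letI : NormedRing (Matrix (Fin n) (Fin n) ℝ) := Matrix.linftyOpNormedRing
  letI : NormedAlgebra ℝ (Matrix (Fin n) (Fin n) ℝ) := Matrix.linftyOpNormedAlgebra
  have hpow : ∀ m : ℕ, (A ^ m).mulVec w = (μ ^ m) • w := by
    intro m
    induction m with
    | zero => simp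
    | succ m ih =>
      rw [pow_succ', pow_succ', ← Matrix.mulVec_mulVec, ih, Matrix.mulVec_smul, h,
        smul_smul, mul_comm]
  let E : Matrix (Fin n) (Fin n) ℝ →ₗ[ℝ] (Fin n → ℝ) :=
    { toFun := fun B => B.mulVec w
      map_add' := fun B C => Matrix.add_mulVec B C w
      map_smul' := fun c B => Matrix.smul_mulVec c B w }
  have h1 : HasSum (fun m : ℕ => E (((Nat.factorial m : ℝ))⁻¹ • A ^ m)) (E (exp A)) :=
    (exp_series_hasSum_exp' (𝕂 := ℝ) A).mapL E.toContinuousLinearMap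
  have h2 : HasSum (fun m : ℕ => E (((Nat.factorial m : ℝ))⁻¹ • A ^ m)) (Real.exp μ • w) := by
    have h3 : HasSum (fun m : ℕ => ((Nat.factorial m : ℝ))⁻¹ • μ ^ m) (exp μ) :=
      exp_series_hasSum_exp' (𝕂 := ℝ) μ
    have := h3.smul_const w
    simp only [smul_assoc] at this
    convert this using 2 with m
    · simp [E, Matrix.smul_mulVec, hpow m]
    · rw [Real.exp_eq_exp_ℝ]
  exact h1.unique h2

/-- let `X` be a diagonalizable endomorphism of `V = ℝⁿ` with eigenvalue
decomposition `V = V_1 ⊕ ... ⊕ V_k` (eigenvalues `lam j`, projections `π j`), and let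
`g` be an invertible linear map commuting with `X`.  If `v_1, ..., v_s` is a thick
collection of vectors (each projection `π j` of the family is thick in `V_j`) and
`g v_i = e^{t_i X} v_i` for some reals `t_i`, then `g = e^{t X}` for some `t ∈ ℝ`. -/
theorem stmt11 (n k s : ℕ) (X : Matrix (Fin n) (Fin n) ℝ)
    (lam : Fin k → ℝ) (hinj : Function.Injective lam)
    (π : Fin k → ((Fin n → ℝ) →ₗ[ℝ] (Fin n → ℝ)))
    (hsum : ∀ v, ∑ j, π j v = v)
    (heig : ∀ (j) (v), X.mulVec (π j v) = lam j • π j v)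
    (horth : ∀ j l, j ≠ l → ∀ v, π j (π l v) = 0)
    (g : Matrix (Fin n) (Fin n) ℝ) (hgu : IsUnit g) (hcomm : g * X = X * g)
    (v : Fin s → (Fin n → ℝ))
    (hthick : ∀ j : Fin k,
      Module.finrank ℝ (LinearMap.range (π j)) < s ∧
      ∀ I : Finset (Fin s), I.card = Module.finrank ℝ (LinearMap.range (π j)) →
        LinearIndependent ℝ (fun i : I => π j (v i)))
    (t : Fin s → ℝ)
    (hgv : ∀ i, g.mulVec (v i) = (NormedSpace.exp (t i • X)).mulVec (v i)) :
    ∃ τ : ℝ, g = NormedSpace.exp (τ • X) := by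
  classical
  -- trivial case: k = 0 forces the whole space to be trivial
  by_cases hk : k = 0
  · subst hk
    refine ⟨0, ?_⟩
    ext a b
    have h0 : (Pi.single b 1 : Fin n → ℝ) = 0 := by simpa using (hsum (Pi.single b 1)).symm
    have := congrFun h0 b
    simp at this
  -- main case
  have hkpos : 0 < k := Nat.pos_of_ne_zero hk
  have hspos : 0 < s := lt_of_le_of_lt (Nat.zero_le _) (hthick ⟨0, hkpos⟩).1
  set i0 : Fin s := ⟨0, hspos⟩ with hi0
  refine ⟨t i0, ?_⟩
  -- basic facts about the projections
  have hidem : ∀ j w, π j (π j w) = π j w := by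
    intro j w
    have h := hsum (π j w)
    rwa [Finset.sum_eq_single j (fun l _ hl => horth l j hl w) (by simp)] at h
  have hπX : ∀ m w, π m (X.mulVec w) = lam m • π m w := by
    intro m w
    have hXw : X.mulVec w = ∑ l, lam l • π l w := by
      conv_lhs => rw [← hsum w]
      rw [show X.mulVec (∑ l, π l w) = ∑ l, X.mulVec (π l w) from
        map_sum X.mulVecLin (fun l => π l w) Finset.univ]
      exact Finset.sum_congr rfl fun l _ => heig l w
    rw [hXw, map_sum]
    rw [Finset.sum_eq_single m (fun l _ hl => by rw [LinearMap.map_smul, horth m l (Ne.symm hl) w, smul_zero])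
      (by simp)]
    rw [LinearMap.map_smul, hidem]
  -- vectors in the eigenspace of `lam j` project correctly
  have heigproj : ∀ (j) (w), X.mulVec w = lam j • w →
      (π j w = w ∧ ∀ m, m ≠ j → π m w = 0) := by
    intro j w hw
    have hm : ∀ m, m ≠ j → π m w = 0 := by
      intro m hm
      have h1 : lam m • π m w = lam j • π m w := by
        have := hπX m w
        rw [hw, LinearMap.map_smul] at this
        exact this.symm
      have h2 : (lam m - lam j) • π m w = 0 := by
        rw [sub_smul, h1, sub_self]
      rcases smul_eq_zero.mp h2 with h | h
      · exact absurd (hinj (by linarith [sub_eq_zero.mp h])) hm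
      · exact h
    constructor
    · have h := hsum w
      rwa [Finset.sum_eq_single j (fun l _ hl => hm l hl) (by simp)] at h
    · exact hm
  -- g preserves each eigenspace
  have hgeig : ∀ (j) (u), X.mulVec u = lam j • u →
      X.mulVec (g.mulVec u) = lam j • g.mulVec u := by
    intro j u hu
    rw [Matrix.mulVec_mulVec, ← hcomm, ← Matrix.mulVec_mulVec, hu, Matrix.mulVec_smul]
  -- key eigen-equation for projections of the v i
  have hgπ : ∀ (i) (j), g.mulVec (π j (v i)) = Real.exp (t i * lam j) • π j (v i) := by
    intro i j
    have h1 : g.mulVec (v i) = ∑ l, g.mulVec (π l (v i)) := by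
      conv_lhs => rw [← hsum (v i)]
      exact map_sum g.mulVecLin (fun l => π l (v i)) Finset.univ
    have h2 : (NormedSpace.exp (t i • X)).mulVec (v i)
        = ∑ l, Real.exp (t i * lam l) • π l (v i) := by
      conv_lhs => rw [← hsum (v i)]
      rw [show (NormedSpace.exp (t i • X)).mulVec (∑ l, π l (v i))
          = ∑ l, (NormedSpace.exp (t i • X)).mulVec (π l (v i)) from
        map_sum (NormedSpace.exp (t i • X)).mulVecLin (fun l => π l (v i)) Finset.univ]
      refine Finset.sum_congr rfl fun l _ => ?_
      exact exp_mulVec_eigen (t i • X) (π l (v i)) (t i * lam l)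
        (by rw [Matrix.smul_mulVec, heig, smul_smul])
    have h3 : ∑ l, g.mulVec (π l (v i)) = ∑ l, Real.exp (t i * lam l) • π l (v i) := by
      rw [← h1, ← h2]; exact hgv i
    have h4 := congrArg (π j) h3
    rw [map_sum, map_sum] at h4
    rw [Finset.sum_eq_single j (fun l _ hl =>
        (heigproj l _ (hgeig l _ (heig l (v i)))).2 j (Ne.symm hl)) (by simp)] at h4
    rw [Finset.sum_eq_single j (fun l _ hl => by
        rw [LinearMap.map_smul, horth j l (Ne.symm hl), smul_zero]) (by simp)] at h4
    rw [(heigproj j _ (hgeig j _ (heig j (v i)))).1, LinearMap.map_smul, hidem] at h4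
    exact h4
  -- key scalar-action claim
  have hkey : ∀ (j) (w), g.mulVec (π j w) = Real.exp (t i0 * lam j) • π j w := by
    intro j
    by_cases hd0 : Module.finrank ℝ (LinearMap.range (π j)) = 0
    · have hbot : LinearMap.range (π j) = ⊥ := by
        simpa [Submodule.finrank_eq_zero] using hd0
      intro w
      have hz : π j w = 0 := by
        have : π j w ∈ (⊥ : Submodule ℝ (Fin n → ℝ)) := hbot ▸ LinearMap.mem_range_self _ w
        simpa using this
      rw [hz]; simp
    set d := Module.finrank ℝ (LinearMap.range (π j)) with hdd
    have hd1 : 1 ≤ d := Nat.one_le_iff_ne_zero.mpr hd0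
    have hds : d < s := (hthick j).1
    -- Step 1: all the exponents agree
    have hexp : ∀ i i' : Fin s, Real.exp (t i * lam j) = Real.exp (t i' * lam j) := by
      have key : ∀ i i' : Fin s, i ≠ i' → Real.exp (t i * lam j) = Real.exp (t i' * lam j) := by
        intro i i' hne
        obtain ⟨I₀, hiI, hIsub, hcard⟩ := Finset.exists_subsuperset_card_eq
          (show {i} ⊆ Finset.univ.erase i' by simp [Finset.singleton_subset_iff, hne])
          (by simpa using hd1)
          (by rw [Finset.card_erase_of_mem (Finset.mem_univ i'), Finset.card_univ,
                Fintype.card_fin]; omega)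
        have hiI₀ : i ∈ I₀ := hiI (Finset.mem_singleton_self i)
        have hi'I₀ : i' ∉ I₀ := fun h => (Finset.notMem_erase i' _) (hIsub h)
        have hli : LinearIndependent ℝ (fun x : I₀ => π j (v x)) := (hthick j).2 I₀ hcard
        haveI : Nonempty I₀ := ⟨⟨i, hiI₀⟩⟩
        -- basis of the range
        have hliu : LinearIndependent ℝ
            (fun x : I₀ => (⟨π j (v x), LinearMap.mem_range_self _ _⟩ :
              LinearMap.range (π j))) := by
          apply LinearIndependent.of_comp (LinearMap.range (π j)).subtype
          exact hli
        have hcardI : Fintype.card I₀ = d := by rw [Fintype.card_coe, hcard]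
        let b := basisOfLinearIndependentOfCardEqFinrank hliu hcardI
        have hb : ∀ x : I₀, (b x : Fin n → ℝ) = π j (v x) := fun x => by
          rw [coe_basisOfLinearIndependentOfCardEqFinrank]
        set w' : LinearMap.range (π j) :=
          ⟨π j (v i'), LinearMap.mem_range_self _ _⟩ with hw'
        set c : I₀ → ℝ := fun x => b.repr w' x with hc
        have hamb : π j (v i') = ∑ x : I₀, c x • π j (v x) := by
          have h5 := congrArg (Subtype.val) (b.sum_repr w')
          rw [show ((∑ x : I₀, b.repr w' x • b x : LinearMap.range (π j)) : Fin n → ℝ)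
              = ∑ x : I₀, b.repr w' x • ((b x : Fin n → ℝ)) by
            push_cast [Submodule.coe_sum]; rfl] at h5
          calc π j (v i') = (w' : Fin n → ℝ) := rfl
            _ = ∑ x : I₀, b.repr w' x • ((b x : Fin n → ℝ)) := h5.symm
            _ = ∑ x : I₀, c x • π j (v x) := Finset.sum_congr rfl fun x _ => by rw [hb, hc]
        have hg1 : Real.exp (t i' * lam j) • π j (v i')
            = ∑ x : I₀, c x • Real.exp (t (x : Fin s) * lam j) • π j (v x) := by
          rw [← hgπ i' j]
          conv_lhs => rw [hamb]
          rw [show g.mulVec (∑ x : I₀, c x • π j (v x))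
              = ∑ x : I₀, g.mulVec (c x • π j (v x)) from
            map_sum g.mulVecLin _ Finset.univ]
          refine Finset.sum_congr rfl fun x _ => ?_
          rw [Matrix.mulVec_smul, hgπ]
        have hg2 : Real.exp (t i' * lam j) • π j (v i')
            = ∑ x : I₀, c x • Real.exp (t i' * lam j) • π j (v x) := by
          conv_lhs => rw [hamb]
          rw [Finset.smul_sum]
          exact Finset.sum_congr rfl fun x _ => smul_comm _ _ _
        have hz : ∑ x : I₀, (c x * (Real.exp (t (x : Fin s) * lam j)
            - Real.exp (t i' * lam j))) • π j (v x) = 0 := by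
          have h6 := sub_eq_zero.mpr (hg1.symm.trans hg2)
          rw [← Finset.sum_sub_distrib] at h6
          rw [← h6]
          refine Finset.sum_congr rfl fun x _ => ?_
          rw [mul_sub, sub_smul, mul_smul, mul_smul]
        have hcoeff := Fintype.linearIndependent_iff.mp hli
          (fun x => c x * (Real.exp (t (x : Fin s) * lam j) - Real.exp (t i' * lam j))) hz
        -- the coefficient c ⟨i, _⟩ is nonzero
        have hci : c ⟨i, hiI₀⟩ ≠ 0 := by
          intro hc0
          set J : Finset (Fin s) := insert i' (I₀.erase i) with hJ
          have hi'J : i' ∉ I₀.erase i := fun h => hi'I₀ (Finset.mem_of_mem_erase h)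
          have hJcard : J.card = d := by
            rw [hJ, Finset.card_insert_of_notMem hi'J,
              Finset.card_erase_of_mem hiI₀, hcard]
            omega
          have hliJ : LinearIndependent ℝ (fun x : J => π j (v x)) := (hthick j).2 J hJcard
          set c' : Fin s → ℝ := fun y => if hy : y ∈ I₀ then c ⟨y, hy⟩ else 0 with hc'
          set h : Fin s → ℝ := fun y => if y = i' then 1 else - c' y with hh
          have hambf : π j (v i') = ∑ y ∈ I₀, c' y • π j (v y) := by
            rw [hamb, ← Finset.sum_coe_sort I₀ (fun y => c' y • π j (v y))]
            refine Finset.sum_congr rfl fun x _ => ?_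
            rw [hc']
            simp only [dif_pos x.2]
          have hsum_erase : ∑ y ∈ I₀.erase i, c' y • π j (v y) = π j (v i') := by
            have h7 := Finset.add_sum_erase I₀ (fun y => c' y • π j (v y)) hiI₀
            have hci' : c' i = 0 := by rw [hc']; simpa [dif_pos hiI₀] using hc0
            simp only [hci', zero_smul, zero_add] at h7
            rw [h7, ← hambf]
          have hzero : ∑ y ∈ J, h y • π j (v y) = 0 := by
            rw [hJ, Finset.sum_insert hi'J]
            have h1 : h i' = 1 := by rw [hh]; simp
            have h2 : ∑ y ∈ I₀.erase i, h y • π j (v y)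
                = - ∑ y ∈ I₀.erase i, c' y • π j (v y) := by
              rw [← Finset.sum_neg_distrib]
              refine Finset.sum_congr rfl fun y hy => ?_
              have hyne : y ≠ i' := fun hE => hi'I₀ (hE ▸ Finset.mem_of_mem_erase hy)
              rw [hh]
              simp only [if_neg hyne, neg_smul]
            rw [h1, one_smul, h2, hsum_erase, add_neg_cancel]
          have hzero' : ∑ x : J, h (x : Fin s) • π j (v (x : Fin s)) = 0 := by
            rw [Finset.sum_coe_sort J (fun y => h y • π j (v y))]
            exact hzero
          have h8 := Fintype.linearIndependent_iff.mp hliJ (fun x => h (x : Fin s)) hzero'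
            ⟨i', Finset.mem_insert_self _ _⟩
          rw [hh] at h8
          simp at h8
        have h9 := hcoeff ⟨i, hiI₀⟩
        have hdiff : Real.exp (t i * lam j) - Real.exp (t i' * lam j) = 0 := by
          rcases mul_eq_zero.mp h9 with h | h
          · exact absurd h hci
          · exact h
        linarith [hdiff]
      intro i i'
      rcases eq_or_ne i i' with rfl | hne
      · rfl
      · exact key i i' hne
    -- Step 2: g acts as the scalar on the whole range of π j
    intro w
    obtain ⟨I₀, -, hcard⟩ := Finset.exists_subset_card_eq
      (show d ≤ (Finset.univ : Finset (Fin s)).card by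
        rw [Finset.card_univ, Fintype.card_fin]; omega)
    have hli : LinearIndependent ℝ (fun x : I₀ => π j (v x)) := (hthick j).2 I₀ hcard
    set μ := Real.exp (t i0 * lam j) with hμ
    set K : Submodule ℝ (Fin n → ℝ) :=
      LinearMap.ker (g.mulVecLin - μ • LinearMap.id) with hK
    have hmemK : ∀ i : Fin s, π j (v i) ∈ K := by
      intro i
      rw [hK, LinearMap.mem_ker, LinearMap.sub_apply, LinearMap.smul_apply,
        LinearMap.id_apply, Matrix.mulVecLin_apply, hgπ i j, hexp i i0, sub_self]
    have hspanle : Submodule.span ℝ (Set.range fun x : I₀ => π j (v x)) ≤ K :=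
      Submodule.span_le.mpr (by rintro _ ⟨x, rfl⟩; exact hmemK x)
    have hspansub : Submodule.span ℝ (Set.range fun x : I₀ => π j (v x))
        ≤ LinearMap.range (π j) :=
      Submodule.span_le.mpr (by rintro _ ⟨x, rfl⟩; exact LinearMap.mem_range_self _ _)
    have h6 : Module.finrank ℝ (Submodule.span ℝ (Set.range fun x : I₀ => π j (v x))) = d := by
      rw [finrank_span_eq_card hli, Fintype.card_coe, hcard]
    have heq := Submodule.eq_of_le_of_finrank_le hspansub (by rw [h6])
    have hmem : π j w ∈ K := hspanle (heq ▸ LinearMap.mem_range_self _ w)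
    rw [hK, LinearMap.mem_ker, LinearMap.sub_apply, LinearMap.smul_apply,
      LinearMap.id_apply, Matrix.mulVecLin_apply, sub_eq_zero] at hmem
    exact hmem
  -- conclusion
  have hfin : ∀ w, g.mulVec w = (NormedSpace.exp (t i0 • X)).mulVec w := by
    intro w
    conv_lhs => rw [← hsum w]
    conv_rhs => rw [← hsum w]
    rw [show g.mulVec (∑ l, π l w) = ∑ l, g.mulVec (π l w) from
      map_sum g.mulVecLin (fun l => π l w) Finset.univ]
    rw [show (NormedSpace.exp (t i0 • X)).mulVec (∑ l, π l w)
        = ∑ l, (NormedSpace.exp (t i0 • X)).mulVec (π l w) from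
      map_sum (NormedSpace.exp (t i0 • X)).mulVecLin (fun l => π l w) Finset.univ]
    refine Finset.sum_congr rfl fun l _ => ?_
    rw [hkey l w, exp_mulVec_eigen (t i0 • X) (π l w) (t i0 * lam l)
      (by rw [Matrix.smul_mulVec, heig, smul_smul])]
  ext a b
  have := congrFun (hfin (Pi.single b 1)) a
  simpa [Matrix.mulVec_single] using this
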